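/- Let A_1,…,A_14 be the linear vector fields on ℝ^{11} (coordinates (X,Y,Z,U1,U2,U3,V1,V2,V3,W1,W2)) given by: A_1 = 3X∂X+3Y∂Y+2Z∂Z+2U1∂U1+2U2∂U2+U3∂U3+2V1∂V1+2V2∂V2+V3∂V3+W1∂W1+W2∂W2; A_2 = 3X∂Z−3V2∂V3+3U1∂W1+4U2∂W2; A_3 = 3Y∂Z−3U1∂U3+4V1∂W1+3V2∂W2; A_4 = 9X∂U1+3V1∂V3+3Z∂W1+2U1∂W2; A_5 = 3Y∂U1−3Z∂U3+V1∂W2; A_6 = 3X∂U2−3U2∂U3+Z∂W2; A_7 = X∂U3; A_8 = 3U2∂U3+9Y∂V2+2V2∂W1+3Z∂W2; A_9 = 3Y∂V1−3V1∂V3+Z∂W1; A_10 = 3X∂V2−3Z∂V3+U2∂W1; A_11 = 3Y∂V3+X∂W2; A_12 = X∂W1; A_13 = Y∂W1; A_14 = Y∂W2. Then for every linear form L : ℝ^{11} → ℝ, the linear span of the fifteen linear forms L∘A_1,…,L∘A_14 and L in the dual space of ℝ^{11} has dimension at most 8. -/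

import Mathlib

open Matrix

/-- The matrices of the linear vector fields `A₁,…,A₁₄` on `ℝ¹¹` (indexed by `Fin 14`,
index `i` corresponding to `A_{i+1}`): the linear parts at the origin of the generators
of `Lift(F'₃₃)`. Target coordinates `(X,Y,Z,U1,U2,U3,V1,V2,V3,W1,W2)` are indexed
`0,…,10`; the entry in row `i`, column `j` is the coefficient of the `j`-th coordinate in
the `i`-th component of the vector field. -/
noncomputable def B : Fin 14 → Matrix (Fin 11) (Fin 11) ℝ
  | 0 => Matrix.diagonal ![3, 3, 2, 2, 2, 1, 2, 2, 1, 1, 1]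
  | 1 => Matrix.single 2 0 3 + Matrix.single 8 7 (-3) +
      Matrix.single 9 3 3 + Matrix.single 10 4 4
  | 2 => Matrix.single 2 1 3 + Matrix.single 5 3 (-3) +
      Matrix.single 9 6 4 + Matrix.single 10 7 3
  | 3 => Matrix.single 3 0 9 + Matrix.single 8 6 3 +
      Matrix.single 9 2 3 + Matrix.single 10 3 2
  | 4 => Matrix.single 3 1 3 + Matrix.single 5 2 (-3) +
      Matrix.single 10 6 1
  | 5 => Matrix.single 4 0 3 + Matrix.single 5 4 (-3) +
      Matrix.single 10 2 1
  | 6 => Matrix.single 5 0 1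
  | 7 => Matrix.single 5 4 3 + Matrix.single 7 1 9 +
      Matrix.single 9 7 2 + Matrix.single 10 2 3
  | 8 => Matrix.single 6 1 3 + Matrix.single 8 6 (-3) +
      Matrix.single 9 2 1
  | 9 => Matrix.single 7 0 3 + Matrix.single 8 2 (-3) +
      Matrix.single 9 4 1
  | 10 => Matrix.single 8 1 3 + Matrix.single 10 0 1
  | 11 => Matrix.single 9 0 1
  | 12 => Matrix.single 9 1 1
  | 13 => Matrix.single 10 1 1

section Aux

/-- Any vector in `ℝ¹¹` is the obvious combination of the coordinate vectors. -/
lemma aux_vec_decomp (v : Fin 11 → ℝ) :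
    v = v 0 • (Pi.single 0 1 : Fin 11 → ℝ) + v 1 • (Pi.single 1 1 : Fin 11 → ℝ)
    + v 2 • (Pi.single 2 1 : Fin 11 → ℝ) + v 3 • (Pi.single 3 1 : Fin 11 → ℝ)
    + v 4 • (Pi.single 4 1 : Fin 11 → ℝ) + v 5 • (Pi.single 5 1 : Fin 11 → ℝ)
    + v 6 • (Pi.single 6 1 : Fin 11 → ℝ) + v 7 • (Pi.single 7 1 : Fin 11 → ℝ)
    + v 8 • (Pi.single 8 1 : Fin 11 → ℝ) + v 9 • (Pi.single 9 1 : Fin 11 → ℝ)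
    + v 10 • (Pi.single 10 1 : Fin 11 → ℝ) := by
  funext j
  fin_cases j <;> simp [Pi.single_apply]

/-- Any linear form on `ℝ¹¹` vanishing on the coordinate vectors `e₅, e₈, e₉, e₁₀`
lies in the span of the seven coordinate projections `proj 0,…,proj 4, proj 6, proj 7`. -/
lemma aux_mem_span_proj (f : (Fin 11 → ℝ) →ₗ[ℝ] ℝ)
    (h5 : f (Pi.single 5 1) = 0) (h8 : f (Pi.single 8 1) = 0)
    (h9 : f (Pi.single 9 1) = 0) (h10 : f (Pi.single 10 1) = 0) :
    f ∈ Submodule.span ℝ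
      ({LinearMap.proj 0, LinearMap.proj 1, LinearMap.proj 2, LinearMap.proj 3,
        LinearMap.proj 4, LinearMap.proj 6, LinearMap.proj 7} :
        Set ((Fin 11 → ℝ) →ₗ[ℝ] ℝ)) := by
  have hf : f = f (Pi.single 0 1) • LinearMap.proj 0 + f (Pi.single 1 1) • LinearMap.proj 1 +
      f (Pi.single 2 1) • LinearMap.proj 2 + f (Pi.single 3 1) • LinearMap.proj 3 +
      f (Pi.single 4 1) • LinearMap.proj 4 + f (Pi.single 6 1) • LinearMap.proj 6 +
      f (Pi.single 7 1) • LinearMap.proj 7 := by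
    apply LinearMap.ext; intro v
    conv_lhs => rw [aux_vec_decomp v]
    simp only [map_add, _root_.map_smul, smul_eq_mul, h5, h8, h9, h10, LinearMap.add_apply,
      LinearMap.smul_apply, LinearMap.proj_apply]
    ring
  rw [hf]
  have m : ∀ g ∈ ({LinearMap.proj 0, LinearMap.proj 1, LinearMap.proj 2, LinearMap.proj 3,
        LinearMap.proj 4, LinearMap.proj 6, LinearMap.proj 7} :
        Set ((Fin 11 → ℝ) →ₗ[ℝ] ℝ)), g ∈ Submodule.span ℝ
      ({LinearMap.proj 0, LinearMap.proj 1, LinearMap.proj 2, LinearMap.proj 3,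
        LinearMap.proj 4, LinearMap.proj 6, LinearMap.proj 7} :
        Set ((Fin 11 → ℝ) →ₗ[ℝ] ℝ)) := fun g hg => Submodule.subset_span hg
  refine Submodule.add_mem _ (Submodule.add_mem _ (Submodule.add_mem _ (Submodule.add_mem _
    (Submodule.add_mem _ (Submodule.add_mem _ ?_ ?_) ?_) ?_) ?_) ?_) ?_ <;>
    exact Submodule.smul_mem _ _ (m _ (by simp))

end Aux

/-- For every linear form `L : ℝ¹¹ → ℝ`, the span of the fifteen linear forms
`L∘A₁, …, L∘A₁₄, L` in the dual of `ℝ¹¹` has dimension at most `8`. This rank bound shows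
that every hyperplane section of `F'₃₃` has `𝒜ₑ`-codimension greater than `2`. -/
theorem span_L_comp_liftF33'_linear_parts_le_eight :
    ∀ L : (Fin 11 → ℝ) →ₗ[ℝ] ℝ,
      Module.finrank ℝ
        (Submodule.span ℝ
          (insert L (Set.range fun i : Fin 14 => L ∘ₗ (B i).mulVecLin))) ≤ 8 := by
  intro L
  classical
  set T : Set ((Fin 11 → ℝ) →ₗ[ℝ] ℝ) :=
    insert L ({LinearMap.proj 0, LinearMap.proj 1, LinearMap.proj 2, LinearMap.proj 3,
      LinearMap.proj 4, LinearMap.proj 6, LinearMap.proj 7} :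
      Set ((Fin 11 → ℝ) →ₗ[ℝ] ℝ)) with hT
  have hmono : Submodule.span ℝ
      ({LinearMap.proj 0, LinearMap.proj 1, LinearMap.proj 2, LinearMap.proj 3,
        LinearMap.proj 4, LinearMap.proj 6, LinearMap.proj 7} :
        Set ((Fin 11 → ℝ) →ₗ[ℝ] ℝ)) ≤ Submodule.span ℝ T :=
    Submodule.span_mono (Set.subset_insert _ _)
  have heval : ∀ (M : Matrix (Fin 11) (Fin 11) ℝ) (a : Fin 11),
      (L ∘ₗ M.mulVecLin) (Pi.single a 1) = L (Mᵀ a) := by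
    intro M a
    rw [LinearMap.comp_apply, Matrix.mulVecLin_apply, Matrix.mulVec_single_one]
    rfl
  have hsub : Submodule.span ℝ (insert L (Set.range fun i : Fin 14 => L ∘ₗ (B i).mulVecLin))
      ≤ Submodule.span ℝ T := by
    rw [Submodule.span_le]
    rintro f (rfl | ⟨i, rfl⟩)
    · exact Submodule.subset_span (Set.mem_insert _ _)
    · fin_cases i
      · -- the diagonal matrix `B 0`
        show L ∘ₗ (B 0).mulVecLin ∈ (Submodule.span ℝ T : Set _)
        have hdiag : L ∘ₗ (B 0).mulVecLin = L + (L ∘ₗ (B 0).mulVecLin - L) := by abel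
        have hcol : ∀ a : Fin 11, a = 5 ∨ a = 8 ∨ a = 9 ∨ a = 10 →
            (L ∘ₗ (B 0).mulVecLin - L) (Pi.single a 1) = 0 := by
          intro a ha
          rw [LinearMap.sub_apply, heval]
          have hc : (B 0)ᵀ a = Pi.single a (1 : ℝ) := by
            funext r
            rw [Matrix.transpose_apply]
            rcases eq_or_ne r a with rfl | hne
            · rw [Pi.single_eq_same]
              rcases ha with rfl | rfl | rfl | rfl <;> rfl
            · rw [Pi.single_eq_of_ne hne]
              exact Matrix.diagonal_apply_ne _ hne
          rw [hc, sub_self]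
        rw [hdiag]
        exact Submodule.add_mem _ (Submodule.subset_span (Set.mem_insert _ _))
          (hmono (aux_mem_span_proj _ (hcol 5 (by norm_num)) (hcol 8 (by norm_num))
            (hcol 9 (by norm_num)) (hcol 10 (by norm_num))))
      all_goals
        refine hmono (aux_mem_span_proj _ ?_ ?_ ?_ ?_) <;>
          (simp only [heval]; convert map_zero L using 2; funext r;
           simp [B, Matrix.single])
  refine (Submodule.finrank_mono hsub).trans ?_
  have hTfin : T = (↑({L, LinearMap.proj 0, LinearMap.proj 1, LinearMap.proj 2,
      LinearMap.proj 3, LinearMap.proj 4, LinearMap.proj 6, LinearMap.proj 7} :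
      Finset ((Fin 11 → ℝ) →ₗ[ℝ] ℝ)) : Set ((Fin 11 → ℝ) →ₗ[ℝ] ℝ)) := by
    simp [hT]
  rw [hTfin]
  refine (finrank_span_finset_le_card _).trans ?_
  refine (Finset.card_insert_le _ _).trans (Nat.succ_le_succ ?_)
  refine (Finset.card_insert_le _ _).trans (Nat.succ_le_succ ?_)
  refine (Finset.card_insert_le _ _).trans (Nat.succ_le_succ ?_)
  refine (Finset.card_insert_le _ _).trans (Nat.succ_le_succ ?_)
  refine (Finset.card_insert_le _ _).trans (Nat.succ_le_succ ?_)
  refine (Finset.card_insert_le _ _).trans (Nat.succ_le_succ ?_)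
  refine (Finset.card_insert_le _ _).trans (Nat.succ_le_succ ?_)
  exact (Finset.card_singleton _).le
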